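/- Let W_1, W_2, … be non-negative random variables such that for every n and every deterministic increasing sequence j_1 < … < j_n, P[∑_{i=1}^n W_{j_i} ≥ Kn] ≤ exp(-εKn/2) whenever K ≥ 2(log C)/ε, where ε > 0 and C > 1 are fixed constants. Then there exists L_1 > 0 such that almost surely, for every δ ∈ (0, e^{-1}), for all sufficiently large N: max{∑_{n∈Ψ} W_n : Ψ ⊆ {1,…,N}, |Ψ| ≤ δN} ≤ L_1 · log(1/δ) · δN. -/

import Mathlib

open MeasureTheory Finset

private lemma sum_orderEmb (s : Finset ℕ) (f : ℕ → ℝ) :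
    ∑ i : Fin s.card, f (s.orderEmbOfFin rfl i) = ∑ n ∈ s, f n := by
  apply Finset.sum_bij (fun (i : Fin s.card) _ => s.orderEmbOfFin rfl i)
  · intro a _; exact Finset.orderEmbOfFin_mem s rfl a
  · intro a _ b _ h; exact (s.orderEmbOfFin rfl).injective h
  · intro b hb
    have : b ∈ Set.range (s.orderEmbOfFin rfl) := by
      rw [Finset.range_orderEmbOfFin]; exact hb
    obtain ⟨i, hi⟩ := this
    exact ⟨i, Finset.mem_univ i, hi⟩
  · intro a _; rfl

private lemma neg_log_one_sub_le {δ : ℝ} (hδ0 : 0 < δ) (hδ : δ ≤ 1/2) :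
    -Real.log (1 - δ) ≤ 2 * δ := by
  have h1δ : (0:ℝ) < 1 - δ := by linarith
  have hexp : Real.exp (-(2*δ)) ≤ 1 - δ := by
    have hmul : Real.exp (-(2*δ)) * Real.exp (2*δ) = 1 := by
      rw [← Real.exp_add]; simp
    nlinarith [Real.add_one_le_exp (2*δ), Real.exp_pos (2*δ), Real.exp_pos (-(2*δ))]
  have := (Real.le_log_iff_exp_le h1δ).mpr hexp
  linarith

private lemma count_bound (N : ℕ) (δ : ℝ) (hδ0 : 0 < δ) (hδ : δ ≤ 1/2) :
    (((((Finset.Icc 1 N).powerset).filter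
      (fun Ψ => Ψ.Nonempty ∧ (Ψ.card : ℝ) ≤ δ * N)).card : ℝ))
      ≤ Real.exp (4 * Real.log (1/δ) * (δ * N)) := by
  classical
  set L := Real.log (1/δ) with hLdef
  have h2δ : (2:ℝ) ≤ 1/δ := by rw [le_div_iff₀ hδ0]; linarith
  have hL2 : Real.log 2 ≤ L := Real.log_le_log (by norm_num) h2δ
  have hLpos : 0 < L := lt_of_lt_of_le (Real.log_pos (by norm_num)) hL2
  have h1δ : (0:ℝ) < 1 - δ := by linarith
  set m := ⌊δ * (N:ℝ)⌋₊ with hmdef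
  have hδN : (0:ℝ) ≤ δ * N := mul_nonneg hδ0.le (Nat.cast_nonneg N)
  have hmδN : (m:ℝ) ≤ δ * N := Nat.floor_le hδN
  have hmN : m ≤ N := by
    have : (m:ℝ) ≤ (N:ℝ) := le_trans hmδN (by nlinarith [Nat.cast_nonneg (α := ℝ) N])
    exact_mod_cast this
  -- step 1: cardinality bound by binomial sum
  have hstep1 : (((Finset.Icc 1 N).powerset).filter
      (fun Ψ => Ψ.Nonempty ∧ (Ψ.card : ℝ) ≤ δ * N)).card
      ≤ ∑ i ∈ Finset.range (m+1), N.choose i := by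
    have hsub : ((Finset.Icc 1 N).powerset).filter
        (fun Ψ => Ψ.Nonempty ∧ (Ψ.card : ℝ) ≤ δ * N)
        ⊆ (Finset.range (m+1)).biUnion (fun i => (Finset.Icc 1 N).powersetCard i) := by
      intro Ψ hΨ
      simp only [Finset.mem_filter, Finset.mem_powerset] at hΨ
      obtain ⟨hsub, _, hcard⟩ := hΨ
      simp only [Finset.mem_biUnion, Finset.mem_range, Finset.mem_powersetCard]
      exact ⟨Ψ.card, Nat.lt_succ_of_le (Nat.le_floor hcard), hsub, rfl⟩
    calc _ ≤ ((Finset.range (m+1)).biUnion (fun i => (Finset.Icc 1 N).powersetCard i)).card :=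
            Finset.card_le_card hsub
      _ ≤ ∑ i ∈ Finset.range (m+1), ((Finset.Icc 1 N).powersetCard i).card :=
            Finset.card_biUnion_le
      _ = ∑ i ∈ Finset.range (m+1), N.choose i := by
            apply Finset.sum_congr rfl
            intro i _
            rw [Finset.card_powersetCard, Nat.card_Icc]
            simp
  -- step 2: binomial sum bound
  have hterm : ∀ i ∈ Finset.range (m+1),
      δ^m * (1-δ)^(N-m) ≤ δ^i * (1-δ)^(N-i) := by
    intro i hi
    have him : i ≤ m := Nat.lt_succ_iff.mp (Finset.mem_range.mp hi)
    have e1 : m = i + (m - i) := by omega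
    have e2 : N - i = (m - i) + (N - m) := by omega
    calc δ^m * (1-δ)^(N-m) = δ^i * (δ^(m-i) * (1-δ)^(N-m)) := by
          rw [e1, pow_add]; ring_nf
          rw [show i + (m - i) - i = m - i from by omega]
      _ ≤ δ^i * ((1-δ)^(m-i) * (1-δ)^(N-m)) := by
          apply mul_le_mul_of_nonneg_left _ (pow_nonneg hδ0.le i)
          apply mul_le_mul_of_nonneg_right _ (pow_nonneg h1δ.le _)
          exact pow_le_pow_left₀ hδ0.le (by linarith) _
      _ = δ^i * (1-δ)^(N-i) := by rw [← pow_add, ← e2]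
  have hexpand : ∑ i ∈ Finset.range (N+1), δ^i * (1-δ)^(N-i) * (N.choose i) = 1 := by
    have := add_pow δ (1-δ) N
    simp only [add_sub_cancel, one_pow] at this
    exact this.symm
  have hsum1 : ∑ i ∈ Finset.range (m+1), δ^i * (1-δ)^(N-i) * (N.choose i) ≤ 1 := by
    refine le_of_le_of_eq ?_ hexpand
    apply Finset.sum_le_sum_of_subset_of_nonneg
    · exact Finset.range_subset_range.mpr (by omega)
    · intro i _ _
      have h1 := pow_nonneg hδ0.le i
      have h2 := pow_nonneg h1δ.le (N-i)
      positivity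
  have hB : (0:ℝ) < δ^m * (1-δ)^(N-m) := by positivity
  have hstep2 : (∑ i ∈ Finset.range (m+1), (N.choose i : ℝ)) * (δ^m * (1-δ)^(N-m)) ≤ 1 := by
    rw [Finset.sum_mul]
    refine le_trans (Finset.sum_le_sum ?_) hsum1
    intro i hi
    have := hterm i hi
    nlinarith [Nat.cast_nonneg (α := ℝ) (N.choose i)]
  have hstep3 : (∑ i ∈ Finset.range (m+1), (N.choose i : ℝ)) ≤ (δ^m * (1-δ)^(N-m))⁻¹ := by
    have := (le_div_iff₀ hB).mpr hstep2
    rwa [one_div] at this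
  -- step 4: exponential bound
  have h4 : (δ^m * (1-δ)^(N-m))⁻¹ ≤ Real.exp (4 * L * (δ * N)) := by
    have hδm : (δ^m)⁻¹ ≤ Real.exp (L * (δ * N)) := by
      have : (δ^m)⁻¹ = (1/δ)^m := by rw [one_div, inv_pow]
      rw [this]
      have hpow : ((1:ℝ)/δ)^m = Real.exp ((m:ℝ) * L) := by
        rw [← Real.log_pow, Real.exp_log (by positivity)]
      rw [hpow, Real.exp_le_exp]
      nlinarith
    have h1δm : ((1-δ)^(N-m))⁻¹ ≤ Real.exp (2 * (δ * N)) := by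
      have hmono : (1-δ)^N ≤ (1-δ)^(N-m) :=
        pow_le_pow_of_le_one h1δ.le (by linarith) (by omega)
      have h1 : ((1-δ)^(N-m))⁻¹ ≤ ((1-δ)^N)⁻¹ := by
        apply inv_anti₀ (by positivity) hmono
      refine le_trans h1 ?_
      have : ((1-δ)^N)⁻¹ = Real.exp ((N:ℝ) * (-Real.log (1-δ))) := by
        rw [mul_neg, Real.exp_neg, ← Real.log_pow, Real.exp_log (by positivity)]
      rw [this, Real.exp_le_exp]
      have := neg_log_one_sub_le hδ0 hδ
      nlinarith [Nat.cast_nonneg (α := ℝ) N]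
    calc (δ^m * (1-δ)^(N-m))⁻¹ = (δ^m)⁻¹ * ((1-δ)^(N-m))⁻¹ := by rw [mul_inv]
      _ ≤ Real.exp (L * (δ * N)) * Real.exp (2 * (δ * N)) := by
          apply mul_le_mul hδm h1δm (by positivity) (Real.exp_nonneg _)
      _ = Real.exp (L * (δ * N) + 2 * (δ * N)) := by rw [← Real.exp_add]
      _ ≤ Real.exp (4 * L * (δ * N)) := by
          rw [Real.exp_le_exp]
          nlinarith [Real.log_two_gt_d9, mul_nonneg hδ0.le (Nat.cast_nonneg (α := ℝ) N)]
  calc (((((Finset.Icc 1 N).powerset).filter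
      (fun Ψ => Ψ.Nonempty ∧ (Ψ.card : ℝ) ≤ δ * N)).card : ℝ))
      ≤ (∑ i ∈ Finset.range (m+1), (N.choose i : ℝ)) := by
        rw [← Nat.cast_sum]; exact_mod_cast hstep1
    _ ≤ (δ^m * (1-δ)^(N-m))⁻¹ := hstep3
    _ ≤ Real.exp (4 * L * (δ * N)) := h4
private lemma fixed_delta {Ω : Type*} [MeasurableSpace Ω] (μ : Measure Ω)
    [IsProbabilityMeasure μ] (W : ℕ → Ω → ℝ)
    (ε C : ℝ) (hε : 0 < ε) (hC : 1 < C)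
    (hLD : ∀ (n : ℕ) (j : Fin n → ℕ), StrictMono j → ∀ K : ℝ, 2 * Real.log C / ε ≤ K →
      (μ {ω | K * n ≤ ∑ i : Fin n, W (j i) ω}).toReal ≤ Real.exp (-(ε * K * n) / 2))
    (L₁ : ℝ) (hL₁pos : 0 < L₁) (hL₁a : 2 * Real.log C / ε ≤ L₁ * Real.log 2)
    (hL₁b : 10 ≤ ε * L₁)
    (δ : ℝ) (hδ0 : 0 < δ) (hδ : δ ≤ 1/2) :
    ∀ᵐ ω ∂μ, ∃ N₀ : ℕ, ∀ N ≥ N₀, ∀ Ψ ⊆ Finset.Icc 1 N, (Ψ.card : ℝ) ≤ δ * N →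
      (∑ n ∈ Ψ, W n ω) ≤ L₁ * Real.log (1/δ) * (δ * N) := by
  classical
  set L := Real.log (1/δ) with hLdef
  have h2δ : (2:ℝ) ≤ 1/δ := by rw [le_div_iff₀ hδ0]; linarith
  have hL2 : Real.log 2 ≤ L := Real.log_le_log (by norm_num) h2δ
  have hLpos : 0 < L := lt_of_lt_of_le (Real.log_pos (by norm_num)) hL2
  set F : ℕ → Finset (Finset ℕ) := fun N => ((Finset.Icc 1 N).powerset).filter
    (fun Ψ => Ψ.Nonempty ∧ (Ψ.card : ℝ) ≤ δ * N) with hFdef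
  set s : ℕ → Set Ω := fun N =>
    ⋃ Ψ ∈ F N, {ω | L₁ * L * (δ * N) ≤ ∑ n ∈ Ψ, W n ω} with hsdef
  -- per-N measure bound
  have key : ∀ N : ℕ, μ (s N) ≤ ENNReal.ofReal (Real.exp (-(L * δ) * N)) := by
    intro N
    have hδN : (0:ℝ) ≤ δ * N := mul_nonneg hδ0.le (Nat.cast_nonneg N)
    have hT0 : (0:ℝ) ≤ L₁ * L * (δ * N) :=
      mul_nonneg (mul_nonneg hL₁pos.le hLpos.le) hδN
    have hperΨ : ∀ Ψ ∈ F N,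
        μ {ω | L₁ * L * (δ * N) ≤ ∑ n ∈ Ψ, W n ω}
          ≤ ENNReal.ofReal (Real.exp (-(ε * (L₁ * L * (δ * N))) / 2)) := by
      intro Ψ hΨ
      simp only [hFdef, Finset.mem_filter, Finset.mem_powerset] at hΨ
      obtain ⟨hsub, hne, hcard⟩ := hΨ
      have hn1 : 1 ≤ Ψ.card := Finset.card_pos.mpr hne
      have hnR : (1:ℝ) ≤ (Ψ.card : ℝ) := by exact_mod_cast hn1
      have hnpos : (0:ℝ) < (Ψ.card : ℝ) := by linarith
      set K := L₁ * L * (δ * N) / Ψ.card with hKdef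
      have hKge : 2 * Real.log C / ε ≤ K := by
        have h1 : 2 * Real.log C / ε ≤ L₁ * L :=
          le_trans hL₁a (mul_le_mul_of_nonneg_left hL2 hL₁pos.le)
        refine le_trans h1 ?_
        rw [hKdef, le_div_iff₀ hnpos]
        exact mul_le_mul_of_nonneg_left hcard (mul_nonneg hL₁pos.le hLpos.le)
      have hKn : K * (Ψ.card : ℝ) = L₁ * L * (δ * N) :=
        div_mul_cancel₀ _ (ne_of_gt hnpos)
      have hset : {ω | K * (Ψ.card : ℝ) ≤ ∑ i : Fin Ψ.card, W (Ψ.orderEmbOfFin rfl i) ω}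
          = {ω | L₁ * L * (δ * N) ≤ ∑ n ∈ Ψ, W n ω} := by
        ext ω
        simp only [Set.mem_setOf_eq, hKn, sum_orderEmb Ψ (fun n => W n ω)]
      have hld := hLD Ψ.card (Ψ.orderEmbOfFin rfl) (Ψ.orderEmbOfFin rfl).strictMono K hKge
      rw [hset] at hld
      have hεKn : ε * K * (Ψ.card : ℝ) = ε * (L₁ * L * (δ * N)) := by
        rw [mul_assoc, hKn]
      rw [hεKn] at hld
      exact (ENNReal.le_ofReal_iff_toReal_le (measure_ne_top μ _)
        (Real.exp_nonneg _)).mpr hld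
    calc μ (s N) ≤ ∑ Ψ ∈ F N, μ {ω | L₁ * L * (δ * N) ≤ ∑ n ∈ Ψ, W n ω} :=
          measure_biUnion_finset_le _ _
      _ ≤ ∑ Ψ ∈ F N, ENNReal.ofReal (Real.exp (-(ε * (L₁ * L * (δ * N))) / 2)) :=
          Finset.sum_le_sum hperΨ
      _ = ((F N).card : ENNReal) * ENNReal.ofReal (Real.exp (-(ε * (L₁ * L * (δ * N))) / 2)) := by
          rw [Finset.sum_const, nsmul_eq_mul]
      _ = ENNReal.ofReal (((F N).card : ℝ) * Real.exp (-(ε * (L₁ * L * (δ * N))) / 2)) := by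
          rw [ENNReal.ofReal_mul (Nat.cast_nonneg _), ENNReal.ofReal_natCast]
      _ ≤ ENNReal.ofReal (Real.exp (-(L * δ) * N)) := by
          apply ENNReal.ofReal_le_ofReal
          calc ((F N).card : ℝ) * Real.exp (-(ε * (L₁ * L * (δ * N))) / 2)
              ≤ Real.exp (4 * L * (δ * N)) * Real.exp (-(ε * (L₁ * L * (δ * N))) / 2) := by
                apply mul_le_mul_of_nonneg_right (count_bound N δ hδ0 hδ) (Real.exp_nonneg _)
            _ = Real.exp (4 * L * (δ * N) + -(ε * (L₁ * L * (δ * N))) / 2) := by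
                rw [← Real.exp_add]
            _ ≤ Real.exp (-(L * δ) * N) := by
                rw [Real.exp_le_exp]
                nlinarith [mul_nonneg (sub_nonneg.mpr hL₁b)
                  (mul_nonneg hLpos.le hδN)]
  -- Borel-Cantelli
  have hsummable : Summable (fun N : ℕ => Real.exp (-(L * δ) * N)) := by
    have heq : (fun N : ℕ => Real.exp (-(L * δ) * N))
        = fun N : ℕ => (Real.exp (-(L * δ)))^N := by
      funext N
      rw [← Real.exp_nat_mul]
      ring_nf
    rw [heq]
    apply summable_geometric_of_lt_one (Real.exp_nonneg _)
    rw [← Real.exp_zero]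
    apply Real.exp_lt_exp.mpr
    nlinarith
  have htsum : ∑' N, μ (s N) ≠ ⊤ := by
    apply ne_top_of_le_ne_top _ (ENNReal.tsum_le_tsum key)
    rw [← ENNReal.ofReal_tsum_of_nonneg (fun _ => Real.exp_nonneg _) hsummable]
    exact ENNReal.ofReal_ne_top
  filter_upwards [ae_eventually_notMem htsum] with ω hω
  rw [Filter.eventually_atTop] at hω
  obtain ⟨N₀, hN₀⟩ := hω
  refine ⟨N₀, fun N hN Ψ hsub hcard => ?_⟩
  have hδN : (0:ℝ) ≤ δ * N := mul_nonneg hδ0.le (Nat.cast_nonneg N)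
  rcases Ψ.eq_empty_or_nonempty with rfl | hne
  · simp only [Finset.sum_empty]
    exact mul_nonneg (mul_nonneg hL₁pos.le hLpos.le) hδN
  · have hΨF : Ψ ∈ F N := by
      simp only [hFdef, Finset.mem_filter, Finset.mem_powerset]
      exact ⟨hsub, hne, hcard⟩
    have : ω ∉ s N := hN₀ N hN
    have hnot : ¬ (L₁ * L * (δ * N) ≤ ∑ n ∈ Ψ, W n ω) := by
      intro hcontra
      apply this
      rw [hsdef]
      exact Set.mem_biUnion hΨF hcontra
    linarith [not_le.mp hnot]
theorem subset_sums_bound {Ω : Type*} [MeasurableSpace Ω] (μ : Measure Ω)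
    [IsProbabilityMeasure μ] (W : ℕ → Ω → ℝ)
    (hWmeas : ∀ n, Measurable (W n)) (hWpos : ∀ n ω, 0 ≤ W n ω)
    (ε C : ℝ) (hε : 0 < ε) (hC : 1 < C)
    (hLD : ∀ (n : ℕ) (j : Fin n → ℕ), StrictMono j → ∀ K : ℝ, 2 * Real.log C / ε ≤ K →
      (μ {ω | K * n ≤ ∑ i : Fin n, W (j i) ω}).toReal ≤ Real.exp (-(ε * K * n) / 2)) :
    ∃ L₁ > (0 : ℝ), ∀ᵐ ω ∂μ, ∀ δ : ℝ, 0 < δ → δ < Real.exp (-1) →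
      ∃ N₀ : ℕ, ∀ N ≥ N₀, ∀ Ψ ⊆ Finset.Icc 1 N, (Ψ.card : ℝ) ≤ δ * N →
        (∑ n ∈ Ψ, W n ω) ≤ L₁ * Real.log (1 / δ) * (δ * N) := by
  have hlog2pos : (0:ℝ) < Real.log 2 := Real.log_pos (by norm_num)
  have hlogCpos : (0:ℝ) < Real.log C := Real.log_pos hC
  set L₁ : ℝ := max (2 * Real.log C / (ε * Real.log 2)) (10 / ε) with hL₁def
  have hL₁pos : 0 < L₁ := lt_of_lt_of_le (by positivity) (le_max_right _ _)
  have hL₁a : 2 * Real.log C / ε ≤ L₁ * Real.log 2 := by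
    have h1 : 2 * Real.log C / (ε * Real.log 2) ≤ L₁ := le_max_left _ _
    have h2 : 2 * Real.log C / (ε * Real.log 2) * Real.log 2 ≤ L₁ * Real.log 2 :=
      mul_le_mul_of_nonneg_right h1 hlog2pos.le
    have h3 : 2 * Real.log C / (ε * Real.log 2) * Real.log 2 = 2 * Real.log C / ε := by
      field_simp
    linarith
  have hL₁b : 10 ≤ ε * L₁ := by
    have h1 : 10 / ε ≤ L₁ := le_max_right _ _
    have h2 : ε * (10 / ε) ≤ ε * L₁ := mul_le_mul_of_nonneg_left h1 hε.le
    rw [mul_div_cancel₀ _ (ne_of_gt hε)] at h2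
    exact h2
  refine ⟨2 * L₁, by linarith, ?_⟩
  have hae : ∀ᵐ ω ∂μ, ∀ k : ℕ,
      ∃ N₀ : ℕ, ∀ N ≥ N₀, ∀ Ψ ⊆ Finset.Icc 1 N,
        (Ψ.card : ℝ) ≤ (1/2:ℝ)^(k+1) * N →
        (∑ n ∈ Ψ, W n ω) ≤ L₁ * Real.log (1/((1/2:ℝ)^(k+1))) * ((1/2:ℝ)^(k+1) * N) := by
    rw [MeasureTheory.ae_all_iff]
    intro k
    apply fixed_delta μ W ε C hε hC hLD L₁ hL₁pos hL₁a hL₁b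
    · positivity
    · calc ((1:ℝ)/2)^(k+1) ≤ (1/2:ℝ)^1 :=
            pow_le_pow_of_le_one (by norm_num) (by norm_num) (by omega)
        _ = 1/2 := pow_one _
  filter_upwards [hae] with ω hω δ hδ0 hδe
  -- δ < exp(-1) < 1/2
  have hexp1 : (2:ℝ) < Real.exp 1 := lt_trans (by norm_num) Real.exp_one_gt_d9
  have hδhalf : δ < 1/2 := by
    have : Real.exp (-1) < 1/2 := by
      rw [Real.exp_neg]
      rw [inv_lt_comm₀ (Real.exp_pos 1) (by norm_num)]
      simpa using hexp1
    linarith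
  -- find the dyadic scale
  have hex : ∃ j : ℕ, (1/2:ℝ)^j < δ := exists_pow_lt_of_lt_one hδ0 (by norm_num)
  set j := Nat.find hex with hjdef
  have hj : (1/2:ℝ)^j < δ := Nat.find_spec hex
  have hj2 : 2 ≤ j := by
    by_contra h
    push_neg at h
    have : (1/2:ℝ)^1 ≤ (1/2:ℝ)^j :=
      pow_le_pow_of_le_one (by norm_num) (by norm_num) (by omega)
    simp only [pow_one] at this
    linarith
  set k := j - 2 with hkdef
  have hk1 : k + 1 = j - 1 := by omega
  set δ' : ℝ := (1/2:ℝ)^(k+1) with hδ'def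
  have hδ'pos : (0:ℝ) < δ' := by positivity
  have hδle : δ ≤ δ' := by
    by_contra h
    push_neg at h
    exact Nat.find_min hex (show k + 1 < j by omega) h
  have hδ'lt : δ' < 2 * δ := by
    have : δ' * (1/2) = (1/2:ℝ)^j := by
      rw [hδ'def, ← pow_succ, show k + 1 + 1 = j from by omega]
    nlinarith
  obtain ⟨N₀, hN₀⟩ := hω k
  refine ⟨N₀, fun N hN Ψ hsub hcard => ?_⟩
  have hNnn : (0:ℝ) ≤ (N:ℝ) := Nat.cast_nonneg N
  have h1 : (Ψ.card : ℝ) ≤ δ' * N :=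
    le_trans hcard (mul_le_mul_of_nonneg_right hδle hNnn)
  have h2 := hN₀ N hN Ψ hsub h1
  have hlogle : Real.log (1/δ') ≤ Real.log (1/δ) :=
    Real.log_le_log (by positivity) (one_div_le_one_div_of_le hδ0 hδle)
  have hlogδpos : (0:ℝ) < Real.log (1/δ) := by
    apply Real.log_pos
    rw [lt_div_iff₀ hδ0]
    linarith
  calc (∑ n ∈ Ψ, W n ω) ≤ L₁ * Real.log (1/δ') * (δ' * N) := h2
    _ ≤ L₁ * Real.log (1/δ) * (δ' * N) := by
        apply mul_le_mul_of_nonneg_right _ (by positivity)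
        exact mul_le_mul_of_nonneg_left hlogle hL₁pos.le
    _ ≤ L₁ * Real.log (1/δ) * (2 * δ * N) := by
        apply mul_le_mul_of_nonneg_left _
          (mul_nonneg hL₁pos.le hlogδpos.le)
        apply mul_le_mul_of_nonneg_right (le_of_lt hδ'lt) hNnn
    _ = 2 * L₁ * Real.log (1/δ) * (δ * N) := by ring
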